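/- Let Ω be a nonempty finite set. For all mass functions m1, m2 on Ω, max_{B⊆Ω} max_{A⊆Ω} |(m1 ⊚∩ m2 ⊚∩ m_B)(A) − (m_∅)(A)| = 1 − (m1 ⊚∩ m2)(∅). Consequently the conflict degree 1 − d_{spe,∞}(m1 ⊚∩ m2, m_∅), defined as one minus the L_∞ norm based specialization distance between m1 ⊚∩ m2 and m_∅, coincides with Dempster's degree of conflict κ(m1,m2) = (m1 ⊚∩ m2)(∅). -/

import Mathlib

open Finset

/-- A mass function on a finite frame `Ω`: nonnegative and sums to one over all subsets. -/
def IsMass {Ω : Type*} [Fintype Ω] (m : Finset Ω → ℝ) : Prop :=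
  (∀ A, 0 ≤ m A) ∧ ∑ A : Finset Ω, m A = 1

/-- Commonality (inclusion functional): `q m A = ∑_{E ⊇ A} m E`. -/
def commonality {Ω : Type*} [Fintype Ω] [DecidableEq Ω] (m : Finset Ω → ℝ) (A : Finset Ω) : ℝ :=
  ∑ E : Finset Ω, if A ⊆ E then m E else 0

/-- Plausibility (hitting functional): `pl m A = ∑_{E ∩ A ≠ ∅} m E`. -/
def plaus {Ω : Type*} [Fintype Ω] [DecidableEq Ω] (m : Finset Ω → ℝ) (A : Finset Ω) : ℝ :=
  ∑ E : Finset Ω, if E ∩ A ≠ ∅ then m E else 0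

/-- Implicability: `b m A = ∑_{E ⊆ A} m E`. -/
def implic {Ω : Type*} [Fintype Ω] [DecidableEq Ω] (m : Finset Ω → ℝ) (A : Finset Ω) : ℝ :=
  ∑ E : Finset Ω, if E ⊆ A then m E else 0

/-- Conjunctive combination: `(m1 ⊚∩ m2)(E) = ∑_{A ∩ B = E} m1 A * m2 B`. -/
def conjC {Ω : Type*} [Fintype Ω] [DecidableEq Ω] (m1 m2 : Finset Ω → ℝ) (E : Finset Ω) : ℝ :=
  ∑ A : Finset Ω, ∑ B : Finset Ω, if A ∩ B = E then m1 A * m2 B else 0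

/-- Disjunctive combination: `(m1 ⊚∪ m2)(E) = ∑_{A ∪ B = E} m1 A * m2 B`. -/
def disjC {Ω : Type*} [Fintype Ω] [DecidableEq Ω] (m1 m2 : Finset Ω → ℝ) (E : Finset Ω) : ℝ :=
  ∑ A : Finset Ω, ∑ B : Finset Ω, if A ∪ B = E then m1 A * m2 B else 0

/-- Categorical mass function `m_A`. -/
def categorical {Ω : Type*} [Fintype Ω] [DecidableEq Ω] (A : Finset Ω) : Finset Ω → ℝ :=
  fun E => if E = A then 1 else 0


lemma conjC_cat {Ω : Type*} [Fintype Ω] [DecidableEq Ω] (m : Finset Ω → ℝ) (B A : Finset Ω) :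
    conjC m (categorical B) A = ∑ C : Finset Ω, if C ∩ B = A then m C else 0 := by
  unfold conjC categorical
  refine Finset.sum_congr rfl fun C _ => ?_
  rw [Finset.sum_eq_single B]
  · simp
  · intro D _ hD
    simp [hD]
  · simp

lemma conjC_sum {Ω : Type*} [Fintype Ω] [DecidableEq Ω] (m1 m2 : Finset Ω → ℝ)
    (h1s : ∑ A : Finset Ω, m1 A = 1) (h2s : ∑ A : Finset Ω, m2 A = 1) :
    ∑ E : Finset Ω, conjC m1 m2 E = 1 := by
  unfold conjC
  rw [Finset.sum_comm]
  have key : ∀ A : Finset Ω,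
      (∑ E : Finset Ω, ∑ B : Finset Ω, if A ∩ B = E then m1 A * m2 B else 0)
      = ∑ B : Finset Ω, m1 A * m2 B := by
    intro A
    rw [Finset.sum_comm]
    refine Finset.sum_congr rfl fun B _ => ?_
    simp
  simp_rw [key, ← Finset.mul_sum, h2s, mul_one, h1s]

/-- For `Ω` nonempty and mass functions `m1, m2`,
`max_{B⊆Ω} max_{A⊆Ω} |(m1 ⊚∩ m2 ⊚∩ m_B)(A) − m_∅(A)| = 1 − (m1 ⊚∩ m2)(∅)`;
hence `1 − d_{spe,∞}(m1 ⊚∩ m2, m_∅)` coincides with Dempster's degree of conflict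
`κ(m1,m2) = (m1 ⊚∩ m2)(∅)`. -/
theorem conflict_spe_inf_eq_dempster {Ω : Type*} [Fintype Ω] [DecidableEq Ω] [Nonempty Ω]
    (m1 m2 : Finset Ω → ℝ) (h1 : IsMass m1) (h2 : IsMass m2) :
    (Finset.univ : Finset (Finset Ω)).sup' Finset.univ_nonempty
        (fun B => (Finset.univ : Finset (Finset Ω)).sup' Finset.univ_nonempty
          (fun A => |conjC (conjC m1 m2) (categorical B) A - categorical (∅ : Finset Ω) A|)) =
      1 - conjC m1 m2 ∅ := by
  obtain ⟨h1n, h1s⟩ := h1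
  obtain ⟨h2n, h2s⟩ := h2
  set m := conjC m1 m2 with hm
  have hmn : ∀ E, 0 ≤ m E := by
    intro E
    refine Finset.sum_nonneg fun A _ => Finset.sum_nonneg fun B _ => ?_
    split
    · exact mul_nonneg (h1n A) (h2n B)
    · exact le_refl 0
  have hms : ∑ E : Finset Ω, m E = 1 := conjC_sum m1 m2 h1s h2s
  have hk1 : m ∅ ≤ 1 := by
    rw [← hms]
    exact Finset.single_le_sum (fun E _ => hmn E) (Finset.mem_univ ∅)
  apply le_antisymm
  · apply Finset.sup'_le
    intro B _
    apply Finset.sup'_le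
    intro A _
    rw [conjC_cat]
    have hS0 : m ∅ ≤ ∑ C : Finset Ω, if C ∩ B = ∅ then m C else 0 := by
      have := Finset.single_le_sum (f := fun C : Finset Ω => if C ∩ B = ∅ then m C else 0)
        (fun C _ => by split; exacts [hmn C, le_refl 0]) (Finset.mem_univ (∅ : Finset Ω))
      simpa using this
    have hS1 : (∑ C : Finset Ω, if C ∩ B = ∅ then m C else 0) ≤ 1 := by
      rw [← hms]
      refine Finset.sum_le_sum fun C _ => ?_
      split; exacts [le_refl _, hmn C]
    by_cases hA : A = ∅
    · subst hA
      have hc : categorical (∅ : Finset Ω) (∅ : Finset Ω) = 1 := by simp [categorical]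
      rw [hc, abs_sub_comm, abs_of_nonneg (by linarith)]
      linarith
    · have hc : categorical (∅ : Finset Ω) A = 0 := by simp [categorical, hA]
      have hAn : 0 ≤ ∑ C : Finset Ω, if C ∩ B = A then m C else 0 := by
        refine Finset.sum_nonneg fun C _ => ?_
        split; exacts [hmn C, le_refl 0]
      have key : (∑ C : Finset Ω, if C ∩ B = A then m C else 0)
          + (∑ C : Finset Ω, if C ∩ B = ∅ then m C else 0) ≤ 1 := by
        rw [← Finset.sum_add_distrib, ← hms]
        refine Finset.sum_le_sum fun C _ => ?_
        by_cases h : C ∩ B = A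
        · simp [h, hA]
        · split_ifs <;> simp [hmn C]
      rw [hc, sub_zero, abs_of_nonneg hAn]
      linarith
  · have hval : (∑ C : Finset Ω, if C ∩ (Finset.univ : Finset Ω) = ∅ then m C else 0) = m ∅ := by
      simp
    have h1 : |conjC m (categorical (Finset.univ : Finset Ω)) ∅ - categorical (∅ : Finset Ω) ∅|
        = 1 - m ∅ := by
      rw [conjC_cat, hval]
      have hc : categorical (∅ : Finset Ω) (∅ : Finset Ω) = 1 := by simp [categorical]
      rw [hc, abs_sub_comm, abs_of_nonneg (by linarith)]
    calc 1 - m ∅ = _ := h1.symm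
      _ ≤ (Finset.univ : Finset (Finset Ω)).sup' Finset.univ_nonempty
          (fun A => |conjC m (categorical (Finset.univ : Finset Ω)) A - categorical (∅ : Finset Ω) A|) :=
        Finset.le_sup' (fun A => |conjC m (categorical (Finset.univ : Finset Ω)) A - categorical (∅ : Finset Ω) A|) (Finset.mem_univ _)
      _ ≤ _ := Finset.le_sup' (fun B => (Finset.univ : Finset (Finset Ω)).sup' Finset.univ_nonempty
          (fun A => |conjC m (categorical B) A - categorical (∅ : Finset Ω) A|)) (Finset.mem_univ _)
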